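/- The function n ↦ H_b(n)/n (equivalently n ↦ Σ_{j=1}^n 1/(j,n)_b) yields a multiplicative function n ↦ n/Σ_{j≤n} 1/(j,n)_b, and for a prime p, H_b(p^{kb+j}) = p^{k(b+1)}(p^{b+1}−1) / (p^{k(b+1)}(p^{b+1}−p) + p − 1) for k ≥ 1 and 0 ≤ j ≤ b−1, while H_b(p^j) = 1 for 0 ≤ j ≤ b−1. -/

import Mathlib

noncomputable def ggcd (b r s : ℕ) : ℕ := sSup {d : ℕ | 0 < d ∧ d ^ b ∣ r ∧ d ^ b ∣ s}

/-- The harmonic mean `H_b(n) = n / (∑_{j ≤ n} 1/(j,n)_b)`. -/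
noncomputable def Hb (b n : ℕ) : ℚ :=
  (n : ℚ) / ∑ j ∈ Finset.Icc 1 n, (1 : ℚ) / (ggcd b j n : ℚ)

namespace HbAux

/-- The largest `d` with `d ^ b ∣ m`. -/
noncomputable def cb (b m : ℕ) : ℕ := sSup {d : ℕ | 0 < d ∧ d ^ b ∣ m}

lemma ggcd_eq_cb (b r s : ℕ) : ggcd b r s = cb b (Nat.gcd r s) := by
  unfold ggcd cb
  congr 1
  ext d
  simp only [Set.mem_setOf_eq, Nat.dvd_gcd_iff]

lemma cb_bddAbove {b : ℕ} (hb : b ≠ 0) {m : ℕ} (hm : 0 < m) :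
    BddAbove {d : ℕ | 0 < d ∧ d ^ b ∣ m} := by
  refine ⟨m, fun d hd => ?_⟩
  exact le_trans (Nat.le_self_pow hb d) (Nat.le_of_dvd hm hd.2)

lemma one_mem_cb {b m : ℕ} : 1 ∈ {d : ℕ | 0 < d ∧ d ^ b ∣ m} := by simp

lemma cb_spec {b : ℕ} (hb : b ≠ 0) {m : ℕ} (hm : 0 < m) :
    0 < cb b m ∧ (cb b m) ^ b ∣ m :=
  Nat.sSup_mem ⟨1, one_mem_cb⟩ (cb_bddAbove hb hm)

lemma le_cb {b : ℕ} (hb : b ≠ 0) {m d : ℕ} (hm : 0 < m) (hd : 0 < d) (hdvd : d ^ b ∣ m) :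
    d ≤ cb b m :=
  le_csSup (cb_bddAbove hb hm) ⟨hd, hdvd⟩

lemma cb_pos {b : ℕ} (hb : b ≠ 0) {m : ℕ} (hm : 0 < m) : 0 < cb b m := (cb_spec hb hm).1

lemma cb_mul {b : ℕ} (hb : b ≠ 0) {u v : ℕ} (hu : 0 < u) (hv : 0 < v)
    (huv : Nat.Coprime u v) : cb b (u * v) = cb b u * cb b v := by
  apply le_antisymm
  · obtain ⟨hd0, hdvd⟩ := cb_spec hb (Nat.mul_pos hu hv)
    set d := cb b (u * v) with hd
    have hdd : d ∣ u * v := (dvd_pow_self d hb).trans hdvd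
    have hsplit : Nat.gcd d u * Nat.gcd d v = d := by
      rw [← huv.gcd_mul d, Nat.gcd_eq_left hdd]
    have h1 : (Nat.gcd d u) ^ b ∣ u := by
      have cop : Nat.Coprime ((Nat.gcd d u) ^ b) v :=
        (Nat.Coprime.coprime_dvd_left (Nat.gcd_dvd_right d u) huv).pow_left _
      refine cop.dvd_of_dvd_mul_right ?_
      exact (pow_dvd_pow_of_dvd (Nat.gcd_dvd_left d u) b).trans hdvd
    have h2 : (Nat.gcd d v) ^ b ∣ v := by
      have cop : Nat.Coprime u ((Nat.gcd d v) ^ b) :=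
        ((Nat.Coprime.coprime_dvd_left (Nat.gcd_dvd_right d v) huv.symm).pow_left _).symm
      refine (Nat.Coprime.dvd_of_dvd_mul_left cop.symm) ?_
      exact (pow_dvd_pow_of_dvd (Nat.gcd_dvd_left d v) b).trans hdvd
    calc d = Nat.gcd d u * Nat.gcd d v := hsplit.symm
      _ ≤ cb b u * cb b v :=
        Nat.mul_le_mul (le_cb hb hu (Nat.gcd_pos_of_pos_left u hd0) h1)
          (le_cb hb hv (Nat.gcd_pos_of_pos_left v hd0) h2)
  · apply le_cb hb (Nat.mul_pos hu hv) (Nat.mul_pos (cb_pos hb hu) (cb_pos hb hv))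
    rw [mul_pow]
    exact mul_dvd_mul (cb_spec hb hu).2 (cb_spec hb hv).2

/-- The sum `S b n = ∑_{1 ≤ j ≤ n} 1/(j,n)_b`. -/
noncomputable def S (b n : ℕ) : ℚ := ∑ j ∈ Finset.Icc 1 n, (1 : ℚ) / (ggcd b j n : ℚ)

lemma Hb_eq (b n : ℕ) : Hb b n = (n : ℚ) / S b n := rfl

lemma S_pos {b : ℕ} (hb : b ≠ 0) {n : ℕ} (hn : 0 < n) : 0 < S b n := by
  apply Finset.sum_pos
  · intro j hj
    simp only [Finset.mem_Icc] at hj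
    have h1 : 0 < ggcd b j n := by
      rw [ggcd_eq_cb]
      exact cb_pos hb (Nat.gcd_pos_of_pos_left n hj.1)
    apply div_pos one_pos
    exact_mod_cast h1
  · exact ⟨1, Finset.mem_Icc.2 ⟨le_refl 1, hn⟩⟩

lemma S_eq_range {b : ℕ} {n : ℕ} (hn : 0 < n) :
    S b n = ∑ j ∈ Finset.range n, (1 : ℚ) / (cb b (Nat.gcd j n) : ℚ) := by
  unfold S
  simp_rw [ggcd_eq_cb]
  rw [Finset.range_eq_Ico, Finset.sum_eq_sum_Ico_succ_bot hn, ← Finset.Ico_add_one_right_eq_Icc,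
    Finset.sum_Ico_succ_top hn]
  rw [Nat.gcd_zero_left, Nat.gcd_self, add_comm]

lemma S_mul {b : ℕ} (hb : b ≠ 0) {m n : ℕ} (hm : 0 < m) (hn : 0 < n)
    (h : Nat.Coprime m n) : S b (m * n) = S b m * S b n := by
  rw [S_eq_range (Nat.mul_pos hm hn), S_eq_range hm, S_eq_range hn,
    Finset.sum_mul_sum, ← Finset.sum_product']
  refine Finset.sum_nbij' (fun j => (j % m, j % n))
    (fun ac => (Nat.chineseRemainder h ac.1 ac.2 : ℕ) % (m * n)) ?_ ?_ ?_ ?_ ?_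
  · intro j _
    simp [Finset.mem_product, Nat.mod_lt _ hm, Nat.mod_lt _ hn]
  · intro ac _
    simp [Nat.mod_lt _ (Nat.mul_pos hm hn)]
  · intro j hj
    have hj' : j < m * n := Finset.mem_range.1 hj
    have hc := (Nat.chineseRemainder h (j % m) (j % n)).2
    have h1 : (Nat.chineseRemainder h (j % m) (j % n) : ℕ) ≡ j [MOD m] :=
      hc.1.trans (Nat.mod_modEq j m)
    have h2 : (Nat.chineseRemainder h (j % m) (j % n) : ℕ) ≡ j [MOD n] :=
      hc.2.trans (Nat.mod_modEq j n)
    have h3 : (Nat.chineseRemainder h (j % m) (j % n) : ℕ) ≡ j [MOD m * n] :=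
      (Nat.modEq_and_modEq_iff_modEq_mul h).1 ⟨h1, h2⟩
    calc (Nat.chineseRemainder h (j % m) (j % n) : ℕ) % (m * n)
        = j % (m * n) := h3
      _ = j := Nat.mod_eq_of_lt hj'
  · rintro ⟨a, c⟩ hac
    simp only [Finset.mem_product, Finset.mem_range] at hac
    have hc := (Nat.chineseRemainder h a c).2
    have e1 : (Nat.chineseRemainder h a c : ℕ) % (m * n) % m
        = (Nat.chineseRemainder h a c : ℕ) % m := Nat.mod_mod_of_dvd _ ⟨n, rfl⟩
    have e2 : (Nat.chineseRemainder h a c : ℕ) % (m * n) % n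
        = (Nat.chineseRemainder h a c : ℕ) % n :=
      Nat.mod_mod_of_dvd _ ⟨m, mul_comm m n⟩
    have f1 : (Nat.chineseRemainder h a c : ℕ) % m = a := by
      have := hc.1
      unfold Nat.ModEq at this
      rw [this, Nat.mod_eq_of_lt hac.1]
    have f2 : (Nat.chineseRemainder h a c : ℕ) % n = c := by
      have := hc.2
      unfold Nat.ModEq at this
      rw [this, Nat.mod_eq_of_lt hac.2]
    simp [e1, e2, f1, f2]
  · intro j _
    have e1 : Nat.gcd j m = Nat.gcd (j % m) m := by rw [Nat.gcd_comm, Nat.gcd_rec]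
    have e2 : Nat.gcd j n = Nat.gcd (j % n) n := by rw [Nat.gcd_comm, Nat.gcd_rec]
    have key : cb b (Nat.gcd j (m * n)) = cb b (Nat.gcd j m) * cb b (Nat.gcd j n) := by
      rw [h.gcd_mul j]
      exact cb_mul hb (Nat.gcd_pos_of_pos_right j hm) (Nat.gcd_pos_of_pos_right j hn)
        (Nat.Coprime.coprime_dvd_left (Nat.gcd_dvd_right j m)
          (Nat.Coprime.coprime_dvd_right (Nat.gcd_dvd_right j n) h))
    rw [key, e1, e2, Nat.cast_mul, div_mul_div_comm, one_mul]

lemma ggcd_prime_pow {b : ℕ} (hb : b ≠ 0) {p : ℕ} (hp : p.Prime) {a x : ℕ} (hx : 0 < x) :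
    ggcd b x (p ^ a) = p ^ (min (a / b) (x.factorization p / b)) := by
  have hb0 : 0 < b := Nat.pos_of_ne_zero hb
  set w := min (a / b) (x.factorization p / b) with hw
  have hwb1 : w * b ≤ a :=
    le_trans (Nat.mul_le_mul_right b (min_le_left _ _)) (Nat.div_mul_le_self a b)
  have hwb2 : w * b ≤ x.factorization p :=
    le_trans (Nat.mul_le_mul_right b (min_le_right _ _)) (Nat.div_mul_le_self _ b)
  have hmem : p ^ w ∈ {d : ℕ | 0 < d ∧ d ^ b ∣ x ∧ d ^ b ∣ p ^ a} := by
    refine ⟨pow_pos hp.pos w, ?_, ?_⟩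
    · rw [← pow_mul]
      exact (Nat.Prime.pow_dvd_iff_le_factorization hp hx.ne').2 hwb2
    · rw [← pow_mul]
      exact pow_dvd_pow p hwb1
  have hub : ∀ d ∈ {d : ℕ | 0 < d ∧ d ^ b ∣ x ∧ d ^ b ∣ p ^ a}, d ≤ p ^ w := by
    rintro d ⟨hd0, hdx, hdpa⟩
    obtain ⟨e, _, rfl⟩ := (Nat.dvd_prime_pow hp).1 ((dvd_pow_self d hb).trans hdpa)
    rw [← pow_mul] at hdx hdpa
    have h1 : e * b ≤ a := (Nat.pow_dvd_pow_iff_le_right hp.one_lt).1 hdpa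
    have h2 : e * b ≤ x.factorization p :=
      (Nat.Prime.pow_dvd_iff_le_factorization hp hx.ne').1 hdx
    have he : e ≤ w :=
      le_min ((Nat.le_div_iff_mul_le hb0).2 h1) ((Nat.le_div_iff_mul_le hb0).2 h2)
    exact Nat.pow_le_pow_right hp.pos he
  unfold ggcd
  exact le_antisymm (csSup_le ⟨p ^ w, hmem⟩ hub) (le_csSup ⟨p ^ w, hub⟩ hmem)

lemma geom_Icc {q : ℚ} (hq : q ≠ 0) (w : ℕ) :
    ∑ e ∈ Finset.Icc 1 w, (q - 1) / q ^ e = 1 - (1 / q) ^ w := by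
  induction w with
  | zero => simp
  | succ w ih =>
    rw [Finset.sum_Icc_succ_top (Nat.succ_le_succ (Nat.zero_le w)), ih]
    rw [one_div_pow, one_div_pow]
    field_simp
    ring

lemma geom_key (q : ℚ) (c k : ℕ) :
    (q ^ c - 1) * ∑ e ∈ Finset.Icc 1 k, q ^ ((k - e) * c) = q ^ (k * c) - 1 := by
  have h1 : ∑ e ∈ Finset.Icc 1 k, q ^ ((k - e) * c)
      = ∑ i ∈ Finset.range k, (q ^ c) ^ i := by
    rw [← Finset.Ico_add_one_right_eq_Icc, Finset.sum_Ico_eq_sum_range, ← Finset.sum_range_reflect]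
    have hkk : k + 1 - 1 = k := by omega
    rw [hkk]
    apply Finset.sum_congr rfl
    intro i hi
    rw [← pow_mul]
    have h2 : k - (1 + (k - 1 - i)) = i := by
      have := Finset.mem_range.1 hi
      omega
    rw [h2, Nat.mul_comm]
  rw [h1, mul_comm, geom_sum_mul, ← pow_mul, Nat.mul_comm c k]

lemma S_prime_pow {b : ℕ} (hb : b ≠ 0) {p : ℕ} (hp : p.Prime) (k j0 : ℕ) (hj0 : j0 < b) :
    S b (p ^ (k * b + j0))
      = (p : ℚ) ^ (k * b + j0)
        - ∑ e ∈ Finset.Icc 1 k,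
            (((p : ℚ) - 1) / (p : ℚ) ^ e) * (p : ℚ) ^ (k * b + j0 - e * b) := by
  have hb0 : 0 < b := Nat.pos_of_ne_zero hb
  set a := k * b + j0 with ha
  have hq0 : (p : ℚ) ≠ 0 := Nat.cast_ne_zero.2 hp.pos.ne'
  have hab : a / b = k := by
    rw [ha, Nat.add_comm, Nat.add_mul_div_right _ _ hb0, Nat.div_eq_of_lt hj0, Nat.zero_add]
  have step2 : ∀ x ∈ Finset.Icc 1 (p ^ a),
      (1 : ℚ) / (ggcd b x (p ^ a) : ℚ)
        = 1 - ∑ e ∈ Finset.Icc 1 k,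
            (((p : ℚ) - 1) / (p : ℚ) ^ e) * (if p ^ (e * b) ∣ x then (1 : ℚ) else 0) := by
    intro x hx
    have hx1 : 0 < x := (Finset.mem_Icc.1 hx).1
    rw [ggcd_prime_pow hb hp hx1, hab]
    set w := min k (x.factorization p / b) with hwdef
    have hwk : w ≤ k := min_le_left _ _
    have hiff : ∀ e, 1 ≤ e → e ≤ k → (p ^ (e * b) ∣ x ↔ e ≤ w) := by
      intro e _ hek
      rw [Nat.Prime.pow_dvd_iff_le_factorization hp hx1.ne', hwdef, le_min_iff,
        ← Nat.le_div_iff_mul_le hb0]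
      tauto
    have hsum : ∑ e ∈ Finset.Icc 1 k,
        (((p : ℚ) - 1) / (p : ℚ) ^ e) * (if p ^ (e * b) ∣ x then (1 : ℚ) else 0)
        = ∑ e ∈ Finset.Icc 1 w, ((p : ℚ) - 1) / (p : ℚ) ^ e := by
      rw [← Finset.sum_subset (Finset.Icc_subset_Icc_right hwk)]
      · apply Finset.sum_congr rfl
        intro e he
        obtain ⟨he1, he2⟩ := Finset.mem_Icc.1 he
        rw [if_pos ((hiff e he1 (he2.trans hwk)).2 he2), mul_one]
      · intro e he hne
        obtain ⟨he1, he2⟩ := Finset.mem_Icc.1 he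
        have : ¬ (e ≤ w) := fun hc => hne (Finset.mem_Icc.2 ⟨he1, hc⟩)
        rw [if_neg (fun hc => this ((hiff e he1 he2).1 hc)), mul_zero]
    rw [hsum, geom_Icc hq0]
    push_cast
    rw [div_pow, one_pow]
    ring
  rw [S, Finset.sum_congr rfl step2, Finset.sum_sub_distrib]
  congr 1
  · rw [Finset.sum_const, Nat.card_Icc]
    have : p ^ a + 1 - 1 = p ^ a := by omega
    rw [this, nsmul_eq_mul, mul_one]
    push_cast
    ring
  · rw [Finset.sum_comm]
    apply Finset.sum_congr rfl
    intro e he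
    obtain ⟨he1, he2⟩ := Finset.mem_Icc.1 he
    rw [← Finset.mul_sum]
    congr 1
    have heb : e * b ≤ a := le_trans (Nat.mul_le_mul_right b he2) (Nat.le_add_right _ _)
    have hIcc : Finset.Icc 1 (p ^ a) = Finset.Ioc 0 (p ^ a) :=
      Finset.Icc_add_one_left_eq_Ioc (a := 0) (b := p ^ a)
    rw [Finset.sum_boole, hIcc, Nat.Ioc_filter_dvd_card_eq_div,
      Nat.pow_div heb hp.pos]
    push_cast
    ring

lemma Hb_prime_pow {b : ℕ} (hb : b ≠ 0) {p : ℕ} (hp : p.Prime) (k j0 : ℕ) (hj0 : j0 < b) :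
    Hb b (p ^ (k * b + j0)) =
      ((p : ℚ) ^ (k * (b + 1)) * ((p : ℚ) ^ (b + 1) - 1)) /
        ((p : ℚ) ^ (k * (b + 1)) * ((p : ℚ) ^ (b + 1) - (p : ℚ)) + (p : ℚ) - 1) := by
  set q : ℚ := (p : ℚ) with hqdef
  have hq1 : 1 < q := by rw [hqdef]; exact_mod_cast hp.one_lt
  have hq0 : q ≠ 0 := by positivity
  have hX1 : (0 : ℚ) < q ^ (b + 1) - 1 := by
    have : (1 : ℚ) < q ^ (b + 1) := one_lt_pow₀ hq1 (Nat.succ_ne_zero b)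
    linarith
  have hXq : q < q ^ (b + 1) := by
    calc q = q ^ 1 := (pow_one q).symm
    _ < q ^ (b + 1) := by
        apply pow_lt_pow_right₀ hq1
        omega
  have hD : (0 : ℚ) < q ^ (k * (b + 1)) * (q ^ (b + 1) - q) + q - 1 := by
    have h1 : (0 : ℚ) < q ^ (k * (b + 1)) * (q ^ (b + 1) - q) :=
      mul_pos (pow_pos (by linarith) _) (by linarith)
    linarith
  have hsum : (∑ e ∈ Finset.Icc 1 k,
        ((q - 1) / q ^ e) * q ^ (k * b + j0 - e * b)) * q ^ k
      = (q - 1) * q ^ j0 * ∑ e ∈ Finset.Icc 1 k, q ^ ((k - e) * (b + 1)) := by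
    rw [Finset.sum_mul, Finset.mul_sum]
    apply Finset.sum_congr rfl
    intro e he
    obtain ⟨he1, he2⟩ := Finset.mem_Icc.1 he
    have hekb : e * b ≤ k * b := Nat.mul_le_mul_right b he2
    have h1 : k * b + j0 - e * b = (k - e) * b + j0 := by
      rw [Nat.sub_mul]; omega
    have h2 : (k - e) * (b + 1) = (k - e) * b + (k - e) := by
      rw [Nat.mul_add, Nat.mul_one]
    have h3 : q ^ k = q ^ e * q ^ (k - e) := by
      rw [← pow_add]; congr 1; omega
    rw [h1, h2, pow_add, pow_add, h3]
    field_simp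
  have hgk := geom_key q (b + 1) k
  have hMain : S b (p ^ (k * b + j0)) * (q ^ k * (q ^ (b + 1) - 1))
      = q ^ j0 * (q ^ (k * (b + 1)) * (q ^ (b + 1) - q) + q - 1) := by
    rw [S_prime_pow hb hp k j0 hj0, sub_mul]
    have hre : (∑ e ∈ Finset.Icc 1 k,
          ((q - 1) / q ^ e) * q ^ (k * b + j0 - e * b)) * (q ^ k * (q ^ (b + 1) - 1))
        = ((∑ e ∈ Finset.Icc 1 k,
          ((q - 1) / q ^ e) * q ^ (k * b + j0 - e * b)) * q ^ k) * (q ^ (b + 1) - 1) := by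
      ring
    rw [hre, hsum]
    linear_combination (-(q - 1) * q ^ j0) * hgk
  have hSc : S b (p ^ (k * b + j0))
      = q ^ j0 * (q ^ (k * (b + 1)) * (q ^ (b + 1) - q) + q - 1)
          / (q ^ k * (q ^ (b + 1) - 1)) := by
    rw [eq_div_iff (mul_ne_zero (pow_ne_zero k hq0) hX1.ne')]
    exact hMain
  rw [Hb_eq, Nat.cast_pow, hSc, div_div_eq_mul_div,
    div_eq_div_iff (mul_ne_zero (pow_ne_zero j0 hq0) hD.ne') hD.ne']
  ring

end HbAux

theorem Hb_multiplicative_and_prime_pow (b : ℕ) (hb : 2 ≤ b) :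
    (∀ m n : ℕ, 1 ≤ m → 1 ≤ n → Nat.Coprime m n →
      Hb b (m * n) = Hb b m * Hb b n) ∧
    (∀ p : ℕ, p.Prime → ∀ k : ℕ, 1 ≤ k → ∀ j : ℕ, j ≤ b - 1 →
      Hb b (p ^ (k * b + j)) =
        ((p : ℚ) ^ (k * (b + 1)) * ((p : ℚ) ^ (b + 1) - 1)) /
          ((p : ℚ) ^ (k * (b + 1)) * ((p : ℚ) ^ (b + 1) - (p : ℚ)) + (p : ℚ) - 1)) ∧
    (∀ p : ℕ, p.Prime → ∀ j : ℕ, j ≤ b - 1 → Hb b (p ^ j) = 1) := by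
  have hb0 : b ≠ 0 := by omega
  refine ⟨?_, ?_, ?_⟩
  · intro m n hm hn h
    rw [HbAux.Hb_eq, HbAux.Hb_eq, HbAux.Hb_eq, HbAux.S_mul hb0 hm hn h,
      Nat.cast_mul, div_mul_div_comm]
  · intro p hp k _ j hj
    exact HbAux.Hb_prime_pow hb0 hp k j (by omega)
  · intro p hp j hj
    have hjb : j < b := by omega
    have h0 : 0 * b + j = j := by omega
    have := HbAux.Hb_prime_pow hb0 hp 0 j hjb
    rw [h0] at this
    rw [this]
    have hq1 : (1 : ℚ) < (p : ℚ) := by exact_mod_cast hp.one_lt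
    have hX1 : (0 : ℚ) < (p : ℚ) ^ (b + 1) - 1 := by
      have : (1 : ℚ) < (p : ℚ) ^ (b + 1) := one_lt_pow₀ hq1 (Nat.succ_ne_zero b)
      linarith
    rw [Nat.zero_mul, pow_zero, one_mul, one_mul]
    have heq : (p : ℚ) ^ (b + 1) - (p : ℚ) + (p : ℚ) - 1 = (p : ℚ) ^ (b + 1) - 1 := by ring
    rw [heq, div_self hX1.ne']
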